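/- After Alice and each of the p Bobs coherently compute into ancillas the parity of their left and right qubits of |g^{p+1}(x;y)⟩_L ⊗ |g^{p+1}(z;w)⟩_R, the resulting state equals (1/√2) Σ_{r∈{0,1}} |r⟩_P (−1)^{w·r} |x ⊕ r^p ⊕ z⟩ ⊗ |g^{2p+2}(x r (r^p ⊕ z); y ⊕ w)⟩, where r^p denotes the bit r repeated p times and x r (r^p ⊕ z) is the concatenation of x, r, and r^p ⊕ z. In particular, all p+1 parity registers hold the same value r, and the Bobs' parity outcomes all agree with Alice's if and only if x = z. -/

import Mathlib

/-- `(−1)^b` for a bit `b`. -/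
def sgn (b : Bool) : ℂ := if b then -1 else 1

/-- Amplitudes of the GHZ state `|g^{p+1}(x;y)⟩ = (1/√2)(|0,x⟩ + (−1)^y |1,x̄⟩)`. -/
noncomputable def ghzAmp (p : ℕ) (x : Fin p → Bool) (y : Bool) :
    (Fin (p + 1) → Bool) → ℂ := fun s =>
  (Real.sqrt 2)⁻¹ *
    ((if s = Fin.cons false x then 1 else 0) +
      sgn y * (if s = Fin.cons true (fun i => !x i) then 1 else 0))

/-- The initial state: all `p+1` parity ancillas in `|0⟩`, together with
`|g^{p+1}(x;y)⟩_L |g^{p+1}(z;w)⟩_R`.  Party `j` holds qubit `j` of each of `L` and `R`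
(`j = 0` is Alice, `j ≥ 1` the Bobs). -/
noncomputable def initState (p : ℕ) (x z : Fin p → Bool) (y w : Bool) :
    (Fin (p + 1) → Bool) × (Fin (p + 1) → Bool) × (Fin (p + 1) → Bool) → ℂ := fun s =>
  (if s.1 = fun _ => false then 1 else 0) * ghzAmp p x y s.2.1 * ghzAmp p z w s.2.2

/-- Each party coherently computes, into its own ancilla, the parity (XOR) of its Left
and Right qubits. -/
def parityCNOTs {p : ℕ}
    (ψ : (Fin (p + 1) → Bool) × (Fin (p + 1) → Bool) × (Fin (p + 1) → Bool) → ℂ) :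
    (Fin (p + 1) → Bool) × (Fin (p + 1) → Bool) × (Fin (p + 1) → Bool) → ℂ := fun s =>
  ψ (fun j => xor (s.1 j) (xor (s.2.1 j) (s.2.2 j)), s.2.1, s.2.2)

/-- After all parties compute their parities, the state equals
`(1/√2) Σ_{r∈{0,1}} |r⟩_P (−1)^{w·r} |x ⊕ r^p ⊕ z⟩ ⊗ |g^{2p+2}(x r (r^p⊕z); y⊕w)⟩`;
and the Bobs' parity outcomes all agree with Alice's iff `x = z`. -/
theorem stmt_12 (p : ℕ) (x z : Fin p → Bool) (y w : Bool) :
    (parityCNOTs (initState p x z y w) = fun s =>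
      (Real.sqrt 2)⁻¹ *
        ∑ rb : Bool,
          (if s.1 = Fin.cons rb (fun i => xor (x i) (xor rb (z i))) then 1 else 0) *
            sgn (w && rb) *
            ((Real.sqrt 2)⁻¹ *
              ((if s.2.1 = Fin.cons false x ∧
                  s.2.2 = Fin.cons rb (fun i => xor rb (z i)) then 1 else 0) +
                sgn (xor y w) *
                  (if s.2.1 = Fin.cons true (fun i => !x i) ∧
                      s.2.2 = Fin.cons (!rb) (fun i => !(xor rb (z i))) then 1 else 0)))) ∧
    ∀ rb : Bool, ((fun i : Fin p => xor (x i) (xor rb (z i))) = fun _ => rb) ↔ x = z := by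
  have hxorzero : ∀ a g : Fin (p + 1) → Bool,
      ((fun j => xor (a j) (g j)) = fun _ => false) ↔ a = g := by
    intro a g
    simp only [funext_iff]
    exact forall_congr' fun j => by cases a j <;> cases g j <;> simp
  have hxorcons : ∀ (b c : Bool) (u v : Fin p → Bool),
      (fun j => xor ((Fin.cons b u : Fin (p+1) → Bool) j) ((Fin.cons c v : Fin (p+1) → Bool) j)) =
        (Fin.cons (xor b c) (fun i => xor (u i) (v i)) : Fin (p+1) → Bool) := by
    intro b c u v
    funext j
    refine Fin.cases ?_ ?_ j <;> simp
  have hfun1 : (fun i : Fin p => !x i ^^ z i) = fun i => x i ^^ !z i := by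
    funext i; cases x i <;> cases z i <;> rfl
  have hfun2 : (fun i : Fin p => !x i ^^ !z i) = fun i => x i ^^ z i := by
    funext i; cases x i <;> cases z i <;> rfl
  constructor
  · funext s
    obtain ⟨a, l, r⟩ := s
    simp only [parityCNOTs, initState, ghzAmp, Fintype.sum_bool]
    by_cases hl0 : l = Fin.cons false x <;> by_cases hl1 : l = Fin.cons true (fun i => !x i) <;>
      by_cases hr0 : r = Fin.cons false z <;>
        by_cases hr1 : r = Fin.cons true (fun i => !z i)
    all_goals
      try (exfalso; rw [hl0] at hl1; exact absurd (Fin.cons_inj.mp hl1).1 (by simp))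
    all_goals
      try (exfalso; rw [hr0] at hr1; exact absurd (Fin.cons_inj.mp hr1).1 (by simp))
    all_goals try subst hl0
    all_goals try subst hl1
    all_goals try subst hr0
    all_goals try subst hr1
    all_goals
      cases y <;> cases w <;>
        simp only [sgn, *, Fin.cons_inj, Bool.xor_false, Bool.false_xor, Bool.xor_true,
          Bool.true_xor, Bool.not_not, Bool.not_true, Bool.not_false, Bool.and_false,
          Bool.and_true, Bool.false_and, Bool.true_and, Bool.false_eq_true, Bool.true_eq_false,
          if_true, if_false, true_and, and_true, false_and, and_false, mul_zero, zero_mul,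
          mul_one, one_mul, add_zero, zero_add, eq_self_iff_true, ite_false, ite_true] <;>
        try ring
  · intro rb
    rw [funext_iff, funext_iff]
    cases rb
    · exact forall_congr' fun i => by cases x i <;> cases z i <;> simp
    · exact forall_congr' fun i => by cases x i <;> cases z i <;> simp
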